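/- A point p = (p12,p13,p14,p23,p24,p34) with nonnegative entries lies in Δ(𝕋₂) (i.e. satisfies √(p_{ij}p_{kl}) + √(p_{ik}p_{jl}) ≥ √(p_{il}p_{jk}) for all choices of distinct i,j,k,l) if and only if the symmetric 4×4 matrix L(p) with zero diagonal and entries p_{ij} off-diagonal has at most one positive eigenvalue. -/

import Mathlib

/-- The symmetric matrix `L(p)` associated to a vector `p ∈ ⋀² ℝ⁴`. -/
def Lmat (p12 p13 p14 p23 p24 p34 : ℝ) : Matrix (Fin 4) (Fin 4) ℝ :=
  !![0, p12, p13, p14;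
     p12, 0, p23, p24;
     p13, p23, 0, p34;
     p14, p24, p34, 0]

lemma twoPos (a b c d : ℝ) (hsum : a + b + c + d = 0)
    (hcube : 0 ≤ a^3 + b^3 + c^3 + d^3) (ha : 0 < a) (hb : 0 < b) :
    0 < a * b * c * d := by
  have hc : c < 0 := by
    by_contra h
    push_neg at h
    have hd : d = -(a+b+c) := by linarith
    have hpos : 0 < (a+b)*(b+c)*(c+a) :=
      mul_pos (mul_pos (by linarith) (by linarith)) (by linarith)
    rw [hd] at hcube
    nlinarith [hpos]
  have hd : d < 0 := by
    by_contra h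
    push_neg at h
    have hc' : c = -(a+b+d) := by linarith
    have hpos : 0 < (a+b)*(b+d)*(d+a) :=
      mul_pos (mul_pos (by linarith) (by linarith)) (by linarith)
    rw [hc'] at hcube
    nlinarith [hpos]
  nlinarith [mul_pos (mul_pos ha hb) (mul_pos_of_neg_of_neg hc hd)]

lemma prodNonpos (a b c d : ℝ) (hsum : a + b + c + d = 0)
    (hb : b ≤ 0) (hc : c ≤ 0) (hd : d ≤ 0) : a * b * c * d ≤ 0 := by
  rcases le_or_gt a 0 with ha | ha
  · have hb0 : b = 0 := le_antisymm hb (by linarith)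
    rw [hb0]; ring_nf; simp
  · have h1 : 0 ≤ (-b) * (-c) * (-d) :=
      mul_nonneg (mul_nonneg (by linarith) (by linarith)) (by linarith)
    nlinarith [mul_nonneg ha.le h1]

lemma count_aux (μ : Fin 4 → ℝ) (hsum : μ 0 + μ 1 + μ 2 + μ 3 = 0)
    (hcube : 0 ≤ (μ 0)^3 + (μ 1)^3 + (μ 2)^3 + (μ 3)^3) :
    μ 0 * μ 1 * μ 2 * μ 3 ≤ 0 ↔
    (Finset.univ.filter fun i => 0 < μ i).card ≤ 1 := by
  rw [Finset.card_filter, Fin.sum_univ_four]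
  rcases lt_or_ge 0 (μ 0) with h0 | h0 <;>
  rcases lt_or_ge 0 (μ 1) with h1 | h1 <;>
  rcases lt_or_ge 0 (μ 2) with h2 | h2 <;>
  rcases lt_or_ge 0 (μ 3) with h3 | h3
  · rw [if_pos h0, if_pos h1, if_pos h2, if_pos h3]; norm_num
    linarith [twoPos (μ 0) (μ 1) (μ 2) (μ 3) hsum hcube h0 h1]
  · rw [if_pos h0, if_pos h1, if_pos h2, if_neg (not_lt.2 h3)]; norm_num
    linarith [twoPos (μ 0) (μ 1) (μ 2) (μ 3) hsum hcube h0 h1]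
  · rw [if_pos h0, if_pos h1, if_neg (not_lt.2 h2), if_pos h3]; norm_num
    linarith [twoPos (μ 0) (μ 1) (μ 2) (μ 3) hsum hcube h0 h1]
  · rw [if_pos h0, if_pos h1, if_neg (not_lt.2 h2), if_neg (not_lt.2 h3)]; norm_num
    linarith [twoPos (μ 0) (μ 1) (μ 2) (μ 3) hsum hcube h0 h1]
  · rw [if_pos h0, if_neg (not_lt.2 h1), if_pos h2, if_pos h3]; norm_num
    linarith [twoPos (μ 0) (μ 2) (μ 1) (μ 3) (by linarith) (by linarith) h0 h2]
  · rw [if_pos h0, if_neg (not_lt.2 h1), if_pos h2, if_neg (not_lt.2 h3)]; norm_num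
    linarith [twoPos (μ 0) (μ 2) (μ 1) (μ 3) (by linarith) (by linarith) h0 h2]
  · rw [if_pos h0, if_neg (not_lt.2 h1), if_neg (not_lt.2 h2), if_pos h3]; norm_num
    linarith [twoPos (μ 0) (μ 3) (μ 1) (μ 2) (by linarith) (by linarith) h0 h3]
  · rw [if_pos h0, if_neg (not_lt.2 h1), if_neg (not_lt.2 h2), if_neg (not_lt.2 h3)]; norm_num
    linarith [prodNonpos (μ 0) (μ 1) (μ 2) (μ 3) hsum h1 h2 h3]
  · rw [if_neg (not_lt.2 h0), if_pos h1, if_pos h2, if_pos h3]; norm_num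
    linarith [twoPos (μ 1) (μ 2) (μ 0) (μ 3) (by linarith) (by linarith) h1 h2]
  · rw [if_neg (not_lt.2 h0), if_pos h1, if_pos h2, if_neg (not_lt.2 h3)]; norm_num
    linarith [twoPos (μ 1) (μ 2) (μ 0) (μ 3) (by linarith) (by linarith) h1 h2]
  · rw [if_neg (not_lt.2 h0), if_pos h1, if_neg (not_lt.2 h2), if_pos h3]; norm_num
    linarith [twoPos (μ 1) (μ 3) (μ 0) (μ 2) (by linarith) (by linarith) h1 h3]
  · rw [if_neg (not_lt.2 h0), if_pos h1, if_neg (not_lt.2 h2), if_neg (not_lt.2 h3)]; norm_num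
    linarith [prodNonpos (μ 1) (μ 0) (μ 2) (μ 3) (by linarith) h0 h2 h3]
  · rw [if_neg (not_lt.2 h0), if_neg (not_lt.2 h1), if_pos h2, if_pos h3]; norm_num
    linarith [twoPos (μ 2) (μ 3) (μ 0) (μ 1) (by linarith) (by linarith) h2 h3]
  · rw [if_neg (not_lt.2 h0), if_neg (not_lt.2 h1), if_pos h2, if_neg (not_lt.2 h3)]; norm_num
    linarith [prodNonpos (μ 2) (μ 0) (μ 1) (μ 3) (by linarith) h0 h1 h3]
  · rw [if_neg (not_lt.2 h0), if_neg (not_lt.2 h1), if_neg (not_lt.2 h2), if_pos h3]; norm_num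
    linarith [prodNonpos (μ 3) (μ 0) (μ 1) (μ 2) (by linarith) h0 h1 h2]
  · rw [if_neg (not_lt.2 h0), if_neg (not_lt.2 h1), if_neg (not_lt.2 h2), if_neg (not_lt.2 h3)];
    norm_num
    linarith [prodNonpos (μ 0) (μ 1) (μ 2) (μ 3) hsum h1 h2 h3]

lemma tri_of (a b c : ℝ) (ha : 0 ≤ a) (hb : 0 ≤ b) (hc : 0 ≤ c)
    (h : a^2*a^2 + b^2*b^2 + c^2*c^2 ≤ 2*(a^2*b^2) + 2*(b^2*c^2) + 2*(c^2*a^2)) :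
    a ≤ b + c := by
  by_contra hlt
  push_neg at hlt
  have h1 : 0 < a + b + c := by linarith
  have h2 : 0 < a - b + c := by linarith
  have h3 : 0 < a + b - c := by linarith
  have h4 : -a + b + c < 0 := by linarith
  nlinarith [mul_neg_of_pos_of_neg (mul_pos (mul_pos h1 h2) h3) h4]

lemma tri_iff (x y z : ℝ) (hx : 0 ≤ x) (hy : 0 ≤ y) (hz : 0 ≤ z) :
    (Real.sqrt y + Real.sqrt z ≥ Real.sqrt x ∧
     Real.sqrt x + Real.sqrt z ≥ Real.sqrt y ∧
     Real.sqrt x + Real.sqrt y ≥ Real.sqrt z) ↔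
    x^2 + y^2 + z^2 - 2*x*y - 2*y*z - 2*z*x ≤ 0 := by
  obtain ⟨a, ha, rfl⟩ : ∃ a, 0 ≤ a ∧ x = a^2 :=
    ⟨Real.sqrt x, Real.sqrt_nonneg x, (Real.sq_sqrt hx).symm⟩
  obtain ⟨b, hb, rfl⟩ : ∃ b, 0 ≤ b ∧ y = b^2 :=
    ⟨Real.sqrt y, Real.sqrt_nonneg y, (Real.sq_sqrt hy).symm⟩
  obtain ⟨c, hc, rfl⟩ : ∃ c, 0 ≤ c ∧ z = c^2 :=
    ⟨Real.sqrt z, Real.sqrt_nonneg z, (Real.sq_sqrt hz).symm⟩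
  rw [Real.sqrt_sq ha, Real.sqrt_sq hb, Real.sqrt_sq hc]
  constructor
  · rintro ⟨h1, h2, h3⟩
    nlinarith [mul_nonneg (mul_nonneg (mul_nonneg
      (show (0:ℝ) ≤ a+b+c by linarith) (show (0:ℝ) ≤ -a+b+c by linarith))
      (show (0:ℝ) ≤ a-b+c by linarith)) (show (0:ℝ) ≤ a+b-c by linarith)]
  · intro h
    exact ⟨tri_of a b c ha hb hc (by nlinarith),
           tri_of b a c hb ha hc (by nlinarith),
           tri_of c a b hc ha hb (by nlinarith)⟩

/-- A nonnegative vector `p` lies in `Δ(𝕋₂)` (the triangle inequalities between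
`√(p12 p34)`, `√(p13 p24)`, `√(p14 p23)` hold) iff `L(p)` has at most one
positive eigenvalue. -/
theorem mem_DeltaT2_iff_lorentzian (p12 p13 p14 p23 p24 p34 : ℝ)
    (h12 : 0 ≤ p12) (h13 : 0 ≤ p13) (h14 : 0 ≤ p14)
    (h23 : 0 ≤ p23) (h24 : 0 ≤ p24) (h34 : 0 ≤ p34)
    (hL : (Lmat p12 p13 p14 p23 p24 p34).IsHermitian) :
    (Real.sqrt (p13*p24) + Real.sqrt (p14*p23) ≥ Real.sqrt (p12*p34) ∧
     Real.sqrt (p12*p34) + Real.sqrt (p14*p23) ≥ Real.sqrt (p13*p24) ∧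
     Real.sqrt (p12*p34) + Real.sqrt (p13*p24) ≥ Real.sqrt (p14*p23)) ↔
    (Finset.univ.filter fun i => 0 < hL.eigenvalues i).card ≤ 1 := by
  set L := Lmat p12 p13 p14 p23 p24 p34 with hLdef
  set μ : Fin 4 → ℝ := hL.eigenvalues with hmu
  set U : Matrix (Fin 4) (Fin 4) ℝ := ↑(Matrix.IsHermitian.eigenvectorUnitary hL) with hUdef
  have hU2 : star U * U = 1 :=
    (Matrix.mem_unitaryGroup_iff').mp (Matrix.IsHermitian.eigenvectorUnitary hL).2
  set D : Matrix (Fin 4) (Fin 4) ℝ := Matrix.diagonal (RCLike.ofReal ∘ μ) with hDdef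
  have hspec : L = U * D * star U := hL.spectral_theorem
  have cancel : ∀ X : Matrix (Fin 4) (Fin 4) ℝ, star U * (U * X) = X := by
    intro X; rw [← Matrix.mul_assoc, hU2, Matrix.one_mul]
  have htrD : Matrix.trace D = μ 0 + μ 1 + μ 2 + μ 3 := by
    simp [hDdef, Matrix.trace_diagonal, Fin.sum_univ_four]
  have htrace : Matrix.trace L = μ 0 + μ 1 + μ 2 + μ 3 := by
    rw [hspec, Matrix.trace_mul_comm (U * D) (star U), ← Matrix.mul_assoc, hU2,
      Matrix.one_mul, htrD]
  have hsum : μ 0 + μ 1 + μ 2 + μ 3 = 0 := by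
    rw [← htrace]
    simp [hLdef, Lmat, Matrix.trace, Matrix.diag, Fin.sum_univ_four]
  have hL3 : L * L * L = U * (D * (D * D)) * star U := by
    rw [hspec]
    simp only [Matrix.mul_assoc, cancel]
  have htrD3 : Matrix.trace (D * (D * D)) = (μ 0)^3 + (μ 1)^3 + (μ 2)^3 + (μ 3)^3 := by
    simp [hDdef, Matrix.diagonal_mul_diagonal, Matrix.trace_diagonal, Fin.sum_univ_four]
    ring
  have htrL3 : Matrix.trace (L * L * L) = (μ 0)^3 + (μ 1)^3 + (μ 2)^3 + (μ 3)^3 := by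
    rw [hL3, Matrix.trace_mul_comm (U * (D * (D * D))) (star U), ← Matrix.mul_assoc, hU2,
      Matrix.one_mul, htrD3]
  have hcube : 0 ≤ (μ 0)^3 + (μ 1)^3 + (μ 2)^3 + (μ 3)^3 := by
    rw [← htrL3]
    have h6 : Matrix.trace (L * L * L) =
        6*(p12*p13*p23 + p12*p14*p24 + p13*p14*p34 + p23*p24*p34) := by
      simp [hLdef, Lmat, Matrix.trace, Matrix.diag, Matrix.mul_apply, Fin.sum_univ_four]
      ring
    rw [h6]
    positivity
  have hdet : L.det = (p12*p34)^2 + (p13*p24)^2 + (p14*p23)^2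
      - 2*(p12*p34)*(p13*p24) - 2*(p13*p24)*(p14*p23) - 2*(p14*p23)*(p12*p34) := by
    simp [hLdef, Lmat, Matrix.det_succ_row_zero, Fin.sum_univ_succ, Fin.succAbove]
    ring
  have hdetprod : L.det = μ 0 * μ 1 * μ 2 * μ 3 := by
    have h := hL.det_eq_prod_eigenvalues
    rw [Fin.prod_univ_four] at h
    exact_mod_cast h
  rw [tri_iff (p12*p34) (p13*p24) (p14*p23) (mul_nonneg h12 h34) (mul_nonneg h13 h24)
    (mul_nonneg h14 h23), ← hdet, hdetprod]
  exact count_aux μ hsum hcube
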